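/- Let v : Z → [0,∞) satisfy sup_{|y|<σ} Σ_{ξ∈Z} e^{-2yξ} v(ξ) ≤ M². Then Σ_{ξ∈Z} e^{2σ|ξ|} v(ξ) ≤ 2M². -/
import Mathlib


open scoped ENNReal BigOperators

open Filter

lemma aux_finsum (σ M : ℝ) (hσ : 0 < σ) (v : ℤ → ℝ≥0∞)
    (h : ∀ y : ℝ, |y| < σ →
      (∑' ξ : ℤ, ENNReal.ofReal (Real.exp (-2 * y * (ξ : ℝ))) * v ξ)
        ≤ ENNReal.ofReal (M ^ 2))
    (t : ℝ) (ht : |t| = σ) (s : Finset ℤ) :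
    ∑ ξ ∈ s, ENNReal.ofReal (Real.exp (-2 * t * (ξ : ℝ))) * v ξ
      ≤ ENNReal.ofReal (M ^ 2) := by
  set b : ℕ → ℝ := fun n => t * (1 - 1 / (n + 1)) with hbdef
  have hb : ∀ n, |b n| < σ := by
    intro n
    have h1 : (0:ℝ) < 1 / (n + 1) := by positivity
    have h2 : 1 / ((n:ℝ) + 1) ≤ 1 := by
      rw [div_le_one (by positivity)]; linarith [Nat.cast_nonneg (α := ℝ) n]
    have : |b n| = |t| * |1 - 1 / ((n:ℝ) + 1)| := abs_mul _ _
    rw [this, abs_of_nonneg (by linarith : (0:ℝ) ≤ 1 - 1 / ((n:ℝ)+1)), ht]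
    nlinarith
  have htend : Filter.Tendsto b atTop (nhds t) := by
    have h0 : Filter.Tendsto (fun n : ℕ => 1 / ((n:ℝ) + 1)) atTop (nhds 0) :=
      tendsto_one_div_add_atTop_nhds_zero_nat
    have h1 : Filter.Tendsto (fun n : ℕ => t * (1 - 1 / ((n:ℝ) + 1))) atTop
        (nhds (t * (1 - 0))) :=
      (((tendsto_const_nhds : Filter.Tendsto (fun _ : ℕ => (1:ℝ)) atTop (nhds 1)).sub
        h0).const_mul t)
    simpa [hbdef] using h1
  have hF : Filter.Tendsto
      (fun n => ∑ ξ ∈ s, ENNReal.ofReal (Real.exp (-2 * b n * (ξ : ℝ))) * v ξ)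
      atTop (nhds (∑ ξ ∈ s, ENNReal.ofReal (Real.exp (-2 * t * (ξ : ℝ))) * v ξ)) := by
    refine tendsto_finset_sum _ (fun ξ _ => ?_)
    have hr : Filter.Tendsto (fun n => -2 * b n * (ξ : ℝ)) atTop (nhds (-2 * t * ξ)) :=
      (htend.const_mul (-2)).mul_const _
    have he : Filter.Tendsto (fun n => Real.exp (-2 * b n * (ξ : ℝ))) atTop
        (nhds (Real.exp (-2 * t * ξ))) := (Real.continuous_exp.tendsto _).comp hr
    exact ENNReal.Tendsto.mul_const
      ((ENNReal.continuous_ofReal.tendsto _).comp he)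
      (Or.inl (by simp [ENNReal.ofReal_eq_zero, not_le, Real.exp_pos]))
  refine le_of_tendsto hF (Filter.Eventually.of_forall fun n => ?_)
  exact le_trans (ENNReal.sum_le_tsum s) (h (b n) (hb n))

/-- If `v : ℤ → [0,∞]` satisfies
`sup_{|y|<σ} Σ_ξ e^{-2yξ} v(ξ) ≤ M²`, then `Σ_ξ e^{2σ|ξ|} v(ξ) ≤ 2M²`. -/
theorem statement2 (σ M : ℝ) (hσ : 0 < σ) (hM : 0 ≤ M) (v : ℤ → ℝ≥0∞)
    (h : ∀ y : ℝ, |y| < σ →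
      (∑' ξ : ℤ, ENNReal.ofReal (Real.exp (-2 * y * (ξ : ℝ))) * v ξ)
        ≤ ENNReal.ofReal (M ^ 2)) :
    (∑' ξ : ℤ, ENNReal.ofReal (Real.exp (2 * σ * |(ξ : ℝ)|)) * v ξ)
      ≤ 2 * ENNReal.ofReal (M ^ 2) := by
  rw [ENNReal.tsum_eq_iSup_sum]
  refine iSup_le fun s => ?_
  have key : ∑ ξ ∈ s, ENNReal.ofReal (Real.exp (2 * σ * |(ξ : ℝ)|)) * v ξ
      ≤ ∑ ξ ∈ s, (ENNReal.ofReal (Real.exp (-2 * σ * (ξ : ℝ))) * v ξ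
        + ENNReal.ofReal (Real.exp (-2 * (-σ) * (ξ : ℝ))) * v ξ) := by
    refine Finset.sum_le_sum fun ξ _ => ?_
    rw [← add_mul]
    refine mul_le_mul_left ?_ _
    rw [← ENNReal.ofReal_add (Real.exp_pos _).le (Real.exp_pos _).le]
    refine ENNReal.ofReal_le_ofReal ?_
    rcases abs_cases (ξ : ℝ) with ⟨he, _⟩ | ⟨he, _⟩
    · rw [he]
      have : 2 * σ * (ξ:ℝ) = -2 * (-σ) * ξ := by ring
      rw [this]
      linarith [Real.exp_pos (-2 * σ * (ξ:ℝ))]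
    · rw [he]
      have : 2 * σ * (-(ξ:ℝ)) = -2 * σ * ξ := by ring
      rw [this]
      linarith [Real.exp_pos (-2 * (-σ) * (ξ:ℝ))]
  refine key.trans ?_
  rw [Finset.sum_add_distrib, two_mul]
  exact add_le_add
    (aux_finsum σ M hσ v h σ (abs_of_pos hσ) s)
    (aux_finsum σ M hσ v h (-σ) (by rw [abs_neg, abs_of_pos hσ]) s)
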